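/- Let k ≥ 2, let F : ℝ → {1,…,k} be a measurable classifier, let X ∈ ℝ, μ_P ∈ ℝ, and σ² > 0. Define p_j = ℙ_{Z ∼ N(X+μ_P, σ²)}(F(Z) = j) and p⁰_j = ℙ_{Z ∼ N(X, σ²)}(F(Z) = j) for j = 1,…,k. Assume p⁰_j > 0 for all j, that p has a unique maximizer j₁ with second-largest entry p_(2) = max_{j ≠ j₁} p_j > 0, and that there exists α > 0 with α ≠ 1 such that α·μ_P² / (2σ²) < −ln( 1 − p_(1) − p_(2) + 2·( (p_(1)^{1−α} + p_(2)^{1−α}) / 2 )^{1/(1−α)} ), where p_(1) = p_{j₁}. Then j₁ is also a maximizer of p⁰, i.e., p⁰_{j₁} ≥ p⁰_j for all j. -/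

import Mathlib

open Real
namespace CRB

lemma tangent_le {α u v : ℝ} (h0 : 0 < α) (h1 : α < 1) (hu : 0 < u) (hv : 0 ≤ v) :
    v ^ α * u ^ (1 - α) ≤ α * v + (1 - α) * u :=
  Real.geom_mean_le_arith_mean2_weighted h0.le (by linarith) hv hu.le (by ring)

lemma tangent_ge {α u v : ℝ} (h1 : 1 < α) (hu : 0 < u) (hv : 0 ≤ v) :
    α * v + (1 - α) * u ≤ v ^ α * u ^ (1 - α) := by
  have h0 : 0 < α := by linarith
  have hA : 0 ≤ v ^ α * u ^ (1 - α) := by positivity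
  have h := Real.geom_mean_le_arith_mean2_weighted (by positivity : (0:ℝ) ≤ 1/α)
    (by rw [sub_nonneg, div_le_one h0]; linarith : (0:ℝ) ≤ 1 - 1/α) hA hu.le
    (by ring)
  have key : (v ^ α * u ^ (1 - α)) ^ (1/α) * u ^ (1 - 1/α) = v := by
    rw [Real.mul_rpow (Real.rpow_nonneg hv _) (Real.rpow_nonneg hu.le _),
      ← Real.rpow_mul hv, ← Real.rpow_mul hu.le, mul_assoc, ← Real.rpow_add hu,
      show α * (1/α) = 1 by field_simp,
      show (1-α)*(1/α) + (1-1/α) = 0 by field_simp; ring]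
    simp
  rw [key] at h
  have h2 := mul_le_mul_of_nonneg_left h h0.le
  have hα : α * (1/α) = 1 := by field_simp
  nlinarith [h2]

lemma mid_ge {α x y : ℝ} (h1 : 1 < α) (hx : 0 ≤ x) (hy : 0 ≤ y) :
    2 * ((x + y)/2) ^ α ≤ x ^ α + y ^ α := by
  set m := (x + y)/2 with hm
  rcases eq_or_lt_of_le (by positivity : (0:ℝ) ≤ m) with h | hmpos
  · have hx0 : x = 0 := by simp [hm] at h; linarith
    have hy0 : y = 0 := by simp [hm] at h; linarith
    simp [hx0, hy0, ← h, Real.zero_rpow (by linarith : α ≠ 0)]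
  · have t1 := tangent_ge h1 hmpos hx
    have t2 := tangent_ge h1 hmpos hy
    have hsum : 2 * m ≤ (x ^ α + y ^ α) * m ^ (1 - α) := by nlinarith
    have hmul := mul_le_mul_of_nonneg_right hsum
      (le_of_lt (Real.rpow_pos_of_pos hmpos (α - 1)))
    have e1 : m * m ^ (α - 1) = m ^ α := by
      nth_rewrite 1 [← Real.rpow_one m]
      rw [← Real.rpow_add hmpos]; norm_num
    have e2 : m ^ (1 - α) * m ^ (α - 1) = 1 := by
      rw [← Real.rpow_add hmpos]; norm_num
    rw [mul_assoc, e1, mul_assoc, e2, mul_one] at hmul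
    linarith

lemma mid_le {α x y : ℝ} (h0 : 0 < α) (h1 : α < 1) (hx : 0 ≤ x) (hy : 0 ≤ y) :
    x ^ α + y ^ α ≤ 2 * ((x + y)/2) ^ α := by
  set m := (x + y)/2 with hm
  rcases eq_or_lt_of_le (by positivity : (0:ℝ) ≤ m) with h | hmpos
  · have hx0 : x = 0 := by simp [hm] at h; linarith
    have hy0 : y = 0 := by simp [hm] at h; linarith
    simp [hx0, hy0, ← h, Real.zero_rpow (by linarith : α ≠ 0)]
  · have t1 := tangent_le h0 h1 hmpos hx
    have t2 := tangent_le h0 h1 hmpos hy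
    have hsum : (x ^ α + y ^ α) * m ^ (1 - α) ≤ 2 * m := by nlinarith
    have hmul := mul_le_mul_of_nonneg_right hsum
      (le_of_lt (Real.rpow_pos_of_pos hmpos (α - 1)))
    have e1 : m * m ^ (α - 1) = m ^ α := by
      nth_rewrite 1 [← Real.rpow_one m]
      rw [← Real.rpow_add hmpos]; norm_num
    have e2 : m ^ (1 - α) * m ^ (α - 1) = 1 := by
      rw [← Real.rpow_add hmpos]; norm_num
    rw [mul_assoc, e2, mul_one, mul_assoc, e1] at hmul
    linarith


lemma mu_ge_min {s a t : ℝ} (hs0 : s ≠ 0) (hs1 : s < 1) (ht : 0 < t) (hta : t ≤ a) :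
    t ≤ ((a ^ s + t ^ s)/2) ^ (1/s) := by
  have ha : 0 < a := lt_of_lt_of_le ht hta
  have hts : 0 < t ^ s := Real.rpow_pos_of_pos ht s
  have hback : (t ^ s) ^ (1/s) = t := by
    rw [← Real.rpow_mul ht.le, mul_one_div, div_self hs0, Real.rpow_one]
  rcases lt_or_gt_of_ne hs0 with hneg | hpos
  · have h1 : a ^ s ≤ t ^ s := Real.rpow_le_rpow_of_nonpos ht hta hneg.le
    have h2 : (a ^ s + t ^ s)/2 ≤ t ^ s := by linarith
    have h3 : 0 < (a ^ s + t ^ s)/2 := by positivity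
    have h4 := Real.rpow_le_rpow_of_nonpos h3 h2 (by
      apply div_nonpos_of_nonneg_of_nonpos <;> linarith : 1/s ≤ 0)
    rwa [hback] at h4
  · have h1 : t ^ s ≤ a ^ s := Real.rpow_le_rpow ht.le hta hpos.le
    have h2 : t ^ s ≤ (a ^ s + t ^ s)/2 := by linarith
    have h4 := Real.rpow_le_rpow hts.le h2 (by positivity : (0:ℝ) ≤ 1/s)
    rwa [hback] at h4

lemma bound_mono {s a b b' : ℝ} (hs0 : s ≠ 0) (hs1 : s < 1) (hb : 0 < b)
    (hbb : b ≤ b') (hba : b' ≤ a) :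
    2 * ((a ^ s + b ^ s)/2) ^ (1/s) - b ≤ 2 * ((a ^ s + b' ^ s)/2) ^ (1/s) - b' := by
  have ha : 0 < a := lt_of_lt_of_le (lt_of_lt_of_le hb hbb) hba
  set g : ℝ → ℝ := fun t => 2 * ((a ^ s + t ^ s)/2) ^ (1/s) - t with hg
  have hderiv : ∀ t : ℝ, 0 < t → HasDerivAt g
      (((a ^ s + t ^ s)/2) ^ (1/s - 1) * t ^ (s - 1) - 1) t := by
    intro t ht
    have hts : 0 < t ^ s := Real.rpow_pos_of_pos ht s
    have hi : 0 < (a ^ s + t ^ s)/2 := by positivity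
    have d1 : HasDerivAt (fun t : ℝ => (a ^ s + t ^ s)/2) (s * t ^ (s-1) / 2) t := by
      have := (Real.hasDerivAt_rpow_const (x := t) (p := s) (Or.inl ht.ne')).const_add (a ^ s)
      exact this.div_const 2
    have d2 : HasDerivAt (fun u : ℝ => u ^ (1/s))
        ((1/s) * ((a ^ s + t ^ s)/2) ^ (1/s - 1)) ((a ^ s + t ^ s)/2) :=
      Real.hasDerivAt_rpow_const (Or.inl hi.ne')
    have d4 : HasDerivAt (fun t : ℝ => 2 * ((a ^ s + t ^ s)/2) ^ (1/s))
        (((a ^ s + t ^ s)/2) ^ (1/s - 1) * t ^ (s - 1)) t := by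
      have h3 := (d2.comp t d1).const_mul 2
      refine h3.congr_deriv ?_
      field_simp
    exact d4.sub (hasDerivAt_id t)
  have key : MonotoneOn g (Set.Icc b a) := by
    apply monotoneOn_of_deriv_nonneg (convex_Icc _ _)
    · intro t htm
      exact (hderiv t (lt_of_lt_of_le hb htm.1)).continuousAt.continuousWithinAt
    · intro t htm
      rw [interior_Icc] at htm
      exact (hderiv t (lt_trans hb htm.1)).differentiableAt.differentiableWithinAt
    · intro t htm
      rw [interior_Icc] at htm
      have ht : 0 < t := lt_trans hb htm.1
      rw [(hderiv t ht).deriv]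
      rw [sub_nonneg]
      have hts : 0 < t ^ s := Real.rpow_pos_of_pos ht s
      have hi : 0 < (a ^ s + t ^ s)/2 := by positivity
      set μ := ((a ^ s + t ^ s)/2) ^ (1/s) with hμ
      have hμt : t ≤ μ := mu_ge_min hs0 hs1 ht htm.2.le
      have e1 : ((a ^ s + t ^ s)/2) ^ (1/s - 1) = μ ^ (1 - s) := by
        rw [hμ, ← Real.rpow_mul hi.le]
        congr 1
        field_simp
      have e2 : μ ^ (1 - s) * t ^ (s - 1) = (μ/t) ^ (1 - s) := by
        rw [Real.div_rpow (le_trans ht.le hμt) ht.le, show s - 1 = -(1-s) by ring,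
          Real.rpow_neg ht.le, div_eq_mul_inv]
      rw [e1, e2]
      calc (1:ℝ) = 1 ^ (1 - s) := (Real.one_rpow _).symm
        _ ≤ (μ/t) ^ (1-s) := Real.rpow_le_rpow zero_le_one
            ((le_div_iff₀ ht).2 (by linarith)) (by linarith)
  have h1 := key (Set.mem_Icc.2 ⟨le_refl b, le_trans hbb hba⟩)
    (Set.mem_Icc.2 ⟨hbb, hba⟩) hbb
  simpa [hg] using h1


lemma claim_gt1 {α a b x y : ℝ} (hα : 1 < α) (hb : 0 < b) (hba : b ≤ a) (hab1 : a + b ≤ 1)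
    (hx : 0 < x) (hxy : x ≤ y) (hxy1 : x + y ≤ 1) (hrz : 1 - a - b = 0 → 1 - x - y = 0) :
    (1 - a - b + 2*((a ^ (1-α) + b ^ (1-α))/2) ^ (1/(1-α))) ^ (1-α)
      ≤ x ^ α * a ^ (1-α) + y ^ α * b ^ (1-α) + (1-x-y) ^ α * (1-a-b) ^ (1-α) := by
  have hs0 : (1:ℝ) - α ≠ 0 := by intro h; linarith [h]
  have hsneg : (1:ℝ) - α < 0 := by linarith
  have ha : 0 < a := lt_of_lt_of_le hb hba
  have hy : 0 < y := lt_of_lt_of_le hx hxy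
  have hz : 0 ≤ 1 - x - y := by linarith
  have hr : 0 ≤ 1 - a - b := by linarith
  have hw : 0 < (x + y)/2 := by positivity
  have has : 0 < a ^ (1-α) := Real.rpow_pos_of_pos ha _
  have hbs : 0 < b ^ (1-α) := Real.rpow_pos_of_pos hb _
  have hI : 0 < (a ^ (1-α) + b ^ (1-α))/2 := by positivity
  have hμ : 0 < ((a ^ (1-α) + b ^ (1-α))/2) ^ (1/(1-α)) := Real.rpow_pos_of_pos hI _
  set μ := ((a ^ (1-α) + b ^ (1-α))/2) ^ (1/(1-α)) with hμdef
  have hμs : μ ^ (1-α) = (a ^ (1-α) + b ^ (1-α))/2 := by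
    rw [hμdef, ← Real.rpow_mul hI.le, one_div, inv_mul_cancel₀ hs0, Real.rpow_one]
  -- step 1
  have hmid := mid_ge hα hx.le hy.le
  have hbas : a ^ (1-α) ≤ b ^ (1-α) := Real.rpow_le_rpow_of_nonpos hb hba hsneg.le
  have hyw : ((x+y)/2) ^ α ≤ y ^ α := Real.rpow_le_rpow hw.le (by linarith) (by linarith)
  have step1 : 2 * μ ^ (1-α) * ((x+y)/2) ^ α ≤ x ^ α * a ^ (1-α) + y ^ α * b ^ (1-α) := by
    rw [hμs]
    nlinarith [mul_le_mul_of_nonneg_left hmid has.le,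
      mul_le_mul_of_nonneg_left hyw (by linarith : 0 ≤ b ^ (1-α) - a ^ (1-α))]
  -- step 2
  have step2 : (1 - a - b + 2*μ) ^ (1-α)
      ≤ 2 * μ ^ (1-α) * ((x+y)/2) ^ α + (1-x-y) ^ α * (1-a-b) ^ (1-α) := by
    rcases eq_or_lt_of_le hr with hr0 | hrpos
    · -- r = 0, hence z = 0
      have hz0 : 1 - x - y = 0 := hrz hr0.symm
      have hxy2 : (x + y)/2 = 1/2 := by rw [show x + y = 1 by linarith]
      have e0 : (1-x-y) ^ α * (1-a-b) ^ (1-α) = 0 := by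
        rw [hz0, Real.zero_rpow (by linarith : α ≠ 0), zero_mul]
      have e1 : (1 - a - b + 2*μ) ^ (1-α) = (2:ℝ) ^ (1-α) * μ ^ (1-α) := by
        rw [← hr0, zero_add, Real.mul_rpow (by norm_num) hμ.le]
      have e2 : ((1:ℝ)/2) ^ α = ((2:ℝ) ^ α)⁻¹ := by
        rw [one_div, Real.inv_rpow (by norm_num)]
      have e3 : (2:ℝ) ^ (1-α) * (2:ℝ) ^ α = 2 := by
        rw [← Real.rpow_add (by norm_num)]; norm_num
      rw [e0, e1, hxy2, e2, add_zero]
      rw [show 2 * μ ^ (1-α) * ((2:ℝ) ^ α)⁻¹ = 2 / (2:ℝ) ^ α * μ ^ (1-α) by ring]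
      have : (2:ℝ) ^ (1-α) = 2 / (2:ℝ) ^ α := by
        rw [eq_div_iff (by positivity), e3]
      rw [← this]
    · set T := 2*μ + (1-a-b) with hT
      have hTpos : 0 < T := by positivity
      have t1 := tangent_ge hα (by positivity : 0 < μ/T) (le_of_lt hw)
      have t3 := tangent_ge hα (by positivity : 0 < (1-a-b)/T) hz
      have ed1 : (μ/T) ^ (1-α) = μ ^ (1-α) / T ^ (1-α) := Real.div_rpow hμ.le hTpos.le _
      have ed2 : ((1-a-b)/T) ^ (1-α) = (1-a-b) ^ (1-α) / T ^ (1-α) :=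
        Real.div_rpow hr hTpos.le _
      rw [ed1] at t1; rw [ed2] at t3
      have hsum : 1 ≤ (2 * μ ^ (1-α) * ((x+y)/2) ^ α + (1-x-y) ^ α * (1-a-b) ^ (1-α)) / T ^ (1-α) := by
        have hTsum : 2 * (μ/T) + (1-a-b)/T = 1 := by
          field_simp
          linarith [hT]
        have hrw : (2 * μ ^ (1-α) * ((x+y)/2) ^ α + (1-x-y) ^ α * (1-a-b) ^ (1-α)) / T ^ (1-α)
            = 2 * (((x+y)/2) ^ α * (μ ^ (1-α) / T ^ (1-α)))
              + (1-x-y) ^ α * ((1-a-b) ^ (1-α) / T ^ (1-α)) := by ring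
        rw [hrw]
        nlinarith [t1, t3]
      have hTs : 0 < T ^ (1-α) := Real.rpow_pos_of_pos hTpos _
      rw [le_div_iff₀ hTs, one_mul] at hsum
      calc (1 - a - b + 2*μ) ^ (1-α) = T ^ (1-α) := by rw [hT]; congr 1; ring
        _ ≤ _ := hsum
  linarith [step2, add_le_add_right step1 ((1-x-y) ^ α * (1-a-b) ^ (1-α))]

lemma claim_lt1 {α a b x y : ℝ} (hα0 : 0 < α) (hα1 : α < 1) (hb : 0 < b) (hba : b ≤ a)
    (hab1 : a + b ≤ 1)
    (hx : 0 < x) (hxy : x ≤ y) (hxy1 : x + y ≤ 1) (hrz : 1 - a - b = 0 → 1 - x - y = 0) :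
    x ^ α * a ^ (1-α) + y ^ α * b ^ (1-α) + (1-x-y) ^ α * (1-a-b) ^ (1-α)
      ≤ (1 - a - b + 2*((a ^ (1-α) + b ^ (1-α))/2) ^ (1/(1-α))) ^ (1-α) := by
  have hs0 : (1:ℝ) - α ≠ 0 := by intro h; linarith [h]
  have hspos : (0:ℝ) < 1 - α := by linarith
  have ha : 0 < a := lt_of_lt_of_le hb hba
  have hy : 0 < y := lt_of_lt_of_le hx hxy
  have hz : 0 ≤ 1 - x - y := by linarith
  have hr : 0 ≤ 1 - a - b := by linarith
  have hw : 0 < (x + y)/2 := by positivity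
  have has : 0 < a ^ (1-α) := Real.rpow_pos_of_pos ha _
  have hbs : 0 < b ^ (1-α) := Real.rpow_pos_of_pos hb _
  have hI : 0 < (a ^ (1-α) + b ^ (1-α))/2 := by positivity
  have hμ : 0 < ((a ^ (1-α) + b ^ (1-α))/2) ^ (1/(1-α)) := Real.rpow_pos_of_pos hI _
  set μ := ((a ^ (1-α) + b ^ (1-α))/2) ^ (1/(1-α)) with hμdef
  have hμs : μ ^ (1-α) = (a ^ (1-α) + b ^ (1-α))/2 := by
    rw [hμdef, ← Real.rpow_mul hI.le, one_div, inv_mul_cancel₀ hs0, Real.rpow_one]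
  have hmid := mid_le hα0 hα1 hx.le hy.le
  have hbas : b ^ (1-α) ≤ a ^ (1-α) := Real.rpow_le_rpow hb.le hba hspos.le
  have hxw : x ^ α ≤ ((x+y)/2) ^ α := Real.rpow_le_rpow hx.le (by linarith) (by linarith)
  have step1 : x ^ α * a ^ (1-α) + y ^ α * b ^ (1-α) ≤ 2 * μ ^ (1-α) * ((x+y)/2) ^ α := by
    rw [hμs]
    nlinarith [mul_le_mul_of_nonneg_left hmid hbs.le,
      mul_le_mul_of_nonneg_left hxw (by linarith : 0 ≤ a ^ (1-α) - b ^ (1-α))]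
  have step2 : 2 * μ ^ (1-α) * ((x+y)/2) ^ α + (1-x-y) ^ α * (1-a-b) ^ (1-α)
      ≤ (1 - a - b + 2*μ) ^ (1-α) := by
    rcases eq_or_lt_of_le hr with hr0 | hrpos
    · have hz0 : 1 - x - y = 0 := hrz hr0.symm
      have hxy2 : (x + y)/2 = 1/2 := by rw [show x + y = 1 by linarith]
      have e0 : (1-x-y) ^ α * (1-a-b) ^ (1-α) = 0 := by
        rw [hz0, Real.zero_rpow (by linarith : α ≠ 0), zero_mul]
      have e1 : (1 - a - b + 2*μ) ^ (1-α) = (2:ℝ) ^ (1-α) * μ ^ (1-α) := by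
        rw [← hr0, zero_add, Real.mul_rpow (by norm_num) hμ.le]
      have e2 : ((1:ℝ)/2) ^ α = ((2:ℝ) ^ α)⁻¹ := by
        rw [one_div, Real.inv_rpow (by norm_num)]
      have e3 : (2:ℝ) ^ (1-α) * (2:ℝ) ^ α = 2 := by
        rw [← Real.rpow_add (by norm_num)]; norm_num
      rw [e0, e1, hxy2, e2, add_zero]
      rw [show 2 * μ ^ (1-α) * ((2:ℝ) ^ α)⁻¹ = 2 / (2:ℝ) ^ α * μ ^ (1-α) by ring]
      have : (2:ℝ) ^ (1-α) = 2 / (2:ℝ) ^ α := by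
        rw [eq_div_iff (by positivity), e3]
      rw [← this]
    · set T := 2*μ + (1-a-b) with hT
      have hTpos : 0 < T := by positivity
      have t1 := tangent_le hα0 hα1 (by positivity : 0 < μ/T) (le_of_lt hw)
      have t3 := tangent_le hα0 hα1 (by positivity : 0 < (1-a-b)/T) hz
      have ed1 : (μ/T) ^ (1-α) = μ ^ (1-α) / T ^ (1-α) := Real.div_rpow hμ.le hTpos.le _
      have ed2 : ((1-a-b)/T) ^ (1-α) = (1-a-b) ^ (1-α) / T ^ (1-α) :=
        Real.div_rpow hr hTpos.le _
      rw [ed1] at t1; rw [ed2] at t3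
      have hsum : (2 * μ ^ (1-α) * ((x+y)/2) ^ α + (1-x-y) ^ α * (1-a-b) ^ (1-α)) / T ^ (1-α) ≤ 1 := by
        have hTsum : 2 * (μ/T) + (1-a-b)/T = 1 := by
          field_simp
          linarith [hT]
        have hrw : (2 * μ ^ (1-α) * ((x+y)/2) ^ α + (1-x-y) ^ α * (1-a-b) ^ (1-α)) / T ^ (1-α)
            = 2 * (((x+y)/2) ^ α * (μ ^ (1-α) / T ^ (1-α)))
              + (1-x-y) ^ α * ((1-a-b) ^ (1-α) / T ^ (1-α)) := by ring
        rw [hrw]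
        nlinarith [t1, t3]
      have hTs : 0 < T ^ (1-α) := Real.rpow_pos_of_pos hTpos _
      rw [div_le_one hTs] at hsum
      calc 2 * μ ^ (1-α) * ((x+y)/2) ^ α + (1-x-y) ^ α * (1-a-b) ^ (1-α) ≤ T ^ (1-α) := hsum
        _ = (1 - a - b + 2*μ) ^ (1-α) := by rw [hT]; congr 1; ring
  linarith [step2, add_le_add_right step1 ((1-x-y) ^ α * (1-a-b) ^ (1-α))]


open ProbabilityTheory MeasureTheory

lemma gauss_prod {v : NNReal} (hv : v ≠ 0) (X m α x : ℝ) :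
    gaussianPDFReal X v x ^ α * gaussianPDFReal (X + m) v x ^ (1-α)
    = Real.exp (α * (α-1) * m^2 / (2*(v:ℝ)))
      * gaussianPDFReal (X + (1-α)*m) v x := by
  have hvpos : (0:ℝ) < (v:ℝ) := by
    exact_mod_cast pos_iff_ne_zero.mpr hv
  simp only [gaussianPDFReal]
  set C := (Real.sqrt (2 * Real.pi * (v:ℝ)))⁻¹ with hCdef
  have hCpos : 0 < C := by
    rw [hCdef]
    have : (0:ℝ) < 2 * Real.pi * (v:ℝ) := by positivity
    positivity
  rw [Real.mul_rpow hCpos.le (Real.exp_nonneg _),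
      Real.mul_rpow hCpos.le (Real.exp_nonneg _),
      ← Real.exp_mul, ← Real.exp_mul]
  have hC : C ^ α * C ^ (1-α) = C := by
    rw [← Real.rpow_add hCpos]; norm_num
  have key : -(x - X)^2 / (2*(v:ℝ)) * α + -(x - (X + m))^2 / (2*(v:ℝ)) * (1-α)
      = α * (α-1) * m^2 / (2*(v:ℝ)) + -(x - (X + (1-α)*m))^2 / (2*(v:ℝ)) := by
    field_simp
    ring
  calc C ^ α * Real.exp (-(x - X)^2 / (2*(v:ℝ)) * α)
        * (C ^ (1-α) * Real.exp (-(x - (X + m))^2 / (2*(v:ℝ)) * (1-α)))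
      = (C ^ α * C ^ (1-α)) * Real.exp (-(x - X)^2 / (2*(v:ℝ)) * α
          + -(x - (X + m))^2 / (2*(v:ℝ)) * (1-α)) := by rw [Real.exp_add]; ring
    _ = C * Real.exp (α * (α-1) * m^2 / (2*(v:ℝ)) + -(x - (X + (1-α)*m))^2 / (2*(v:ℝ))) := by
        rw [hC, key]
    _ = Real.exp (α * (α-1) * m^2 / (2*(v:ℝ)))
        * (C * Real.exp (-(x - (X + (1-α)*m))^2 / (2*(v:ℝ)))) := by
        rw [Real.exp_add]; ring

lemma lintegral_hfun {v : NNReal} (hv : v ≠ 0) (X m α : ℝ) :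
    ∫⁻ x, (gaussianPDF X v x) ^ α * (gaussianPDF (X + m) v x) ^ (1-α)
      = ENNReal.ofReal (Real.exp (α * (α-1) * m^2 / (2*(v:ℝ)))) := by
  have hpt : ∀ x, (gaussianPDF X v x) ^ α * (gaussianPDF (X + m) v x) ^ (1-α)
      = ENNReal.ofReal (Real.exp (α * (α-1) * m^2 / (2*(v:ℝ))))
        * ENNReal.ofReal (gaussianPDFReal (X + (1-α)*m) v x) := by
    intro x
    rw [gaussianPDF, gaussianPDF,
      ENNReal.ofReal_rpow_of_pos (gaussianPDFReal_pos _ _ _ hv),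
      ENNReal.ofReal_rpow_of_pos (gaussianPDFReal_pos _ _ _ hv),
      ← ENNReal.ofReal_mul (Real.rpow_nonneg (gaussianPDFReal_nonneg _ _ _) _),
      gauss_prod hv,
      ENNReal.ofReal_mul (Real.exp_nonneg _)]
  simp_rw [hpt]
  rw [lintegral_const_mul _ ((measurable_gaussianPDFReal _ _).ennreal_ofReal),
    lintegral_gaussianPDFReal_eq_one _ hv, mul_one]

lemma gauss_zero_iff (m : ℝ) {v : NNReal} (hv : v ≠ 0) {S : Set ℝ} (hS : MeasurableSet S) :
    gaussianReal m v S = 0 ↔ volume S = 0 := by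
  rw [gaussianReal_apply m hv S]
  constructor
  · intro h
    have h1 := (lintegral_eq_zero_iff (measurable_gaussianPDF m v)).1 h
    have h2 : ∀ᵐ x ∂(volume.restrict S), False :=
      h1.mono (fun x hx => (gaussianPDF_pos m hv x).ne' hx)
    have h3 : (volume.restrict S) Set.univ = 0 := by
      simpa [ae_iff] using h2
    simpa [Measure.restrict_apply_univ] using h3
  · intro h
    rw [Measure.restrict_eq_zero.mpr h, lintegral_zero_measure]


lemma cell_le {v : NNReal} (hv : v ≠ 0) (X m : ℝ) {α : ℝ} (hα0 : 0 < α) (hα1 : α < 1)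
    {E : Set ℝ} (hE : MeasurableSet E) :
    ∫⁻ x in E, (gaussianPDF X v x) ^ α * (gaussianPDF (X + m) v x) ^ (1-α)
      ≤ (gaussianReal X v E) ^ α * (gaussianReal (X + m) v E) ^ (1-α) := by
  rw [gaussianReal_apply _ hv E, gaussianReal_apply _ hv E]
  exact ENNReal.lintegral_mul_norm_pow_le
    (measurable_gaussianPDF _ _).aemeasurable
    (measurable_gaussianPDF _ _).aemeasurable hα0.le (by linarith) (by ring)

lemma cell_ge {v : NNReal} (hv : v ≠ 0) (X m : ℝ) {α : ℝ} (hα : 1 < α)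
    {E : Set ℝ} (hE : MeasurableSet E) :
    (gaussianReal X v E) ^ α * (gaussianReal (X + m) v E) ^ (1-α)
      ≤ ∫⁻ x in E, (gaussianPDF X v x) ^ α * (gaussianPDF (X + m) v x) ^ (1-α) := by
  have hα0 : (0:ℝ) < α := by linarith
  by_cases hPE : gaussianReal (X + m) v E = 0
  · have hQE : gaussianReal X v E = 0 := by
      rw [gauss_zero_iff X hv hE]
      exact (gauss_zero_iff (X + m) hv hE).1 hPE
    rw [hQE, ENNReal.zero_rpow_of_pos hα0, zero_mul]
    exact bot_le
  · set fQ := gaussianPDF X v with hfQ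
    set fP := gaussianPDF (X + m) v with hfP
    have hQne : ∀ x, fQ x ≠ 0 := fun x => (gaussianPDF_pos X hv x).ne'
    have hQnt : ∀ x, fQ x ≠ ⊤ := fun x => ENNReal.ofReal_ne_top
    have hPne : ∀ x, fP x ≠ 0 := fun x => (gaussianPDF_pos (X + m) hv x).ne'
    have hPnt : ∀ x, fP x ≠ ⊤ := fun x => ENNReal.ofReal_ne_top
    have hmeas : Measurable (fun x => fQ x ^ α * fP x ^ (1-α)) :=
      ((measurable_gaussianPDF X v).pow_const _).mul
        ((measurable_gaussianPDF (X + m) v).pow_const _)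
    have H := ENNReal.lintegral_mul_norm_pow_le (μ := volume.restrict E)
      (f := fun x => fQ x ^ α * fP x ^ (1-α)) (g := fP)
      hmeas.aemeasurable (measurable_gaussianPDF _ _).aemeasurable
      (p := 1/α) (q := 1 - 1/α) (by positivity)
      (by rw [sub_nonneg, div_le_one hα0]; linarith) (by ring)
    have hpt : ∀ x, (fQ x ^ α * fP x ^ (1-α)) ^ (1/α) * fP x ^ (1 - 1/α) = fQ x := by
      intro x
      rw [ENNReal.mul_rpow_of_nonneg _ _ (by positivity : (0:ℝ) ≤ 1/α),
        ← ENNReal.rpow_mul, ← ENNReal.rpow_mul, mul_assoc,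
        ← ENNReal.rpow_add _ _ (hPne x) (hPnt x),
        show α * (1/α) = 1 by field_simp,
        show (1-α) * (1/α) + (1 - 1/α) = 0 by field_simp; ring,
        ENNReal.rpow_one, ENNReal.rpow_zero, mul_one]
    simp_rw [hpt] at H
    rw [← gaussianReal_apply _ hv E] at H
    have H2 := ENNReal.rpow_le_rpow H hα0.le
    rw [ENNReal.mul_rpow_of_nonneg _ _ hα0.le, ← ENNReal.rpow_mul, ← ENNReal.rpow_mul,
      show 1/α * α = 1 by field_simp, ENNReal.rpow_one,
      show (1 - 1/α) * α = α - 1 by field_simp] at H2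
    have hIP : (∫⁻ x in E, fP x) = gaussianReal (X + m) v E := (gaussianReal_apply _ hv E).symm
    rw [hIP] at H2
    set IP := gaussianReal (X + m) v E with hIPdef
    have hIPnt : IP ≠ ⊤ := measure_ne_top _ _
    calc (gaussianReal X v E) ^ α * IP ^ (1-α)
        ≤ (∫⁻ x in E, fQ x ^ α * fP x ^ (1-α)) * IP ^ (α-1) * IP ^ (1-α) :=
          mul_le_mul_left H2 _
      _ = (∫⁻ x in E, fQ x ^ α * fP x ^ (1-α)) * (IP ^ (α-1) * IP ^ (1-α)) := by ring
      _ = ∫⁻ x in E, fQ x ^ α * fP x ^ (1-α) := by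
          rw [← ENNReal.rpow_add _ _ hPE hIPnt]
          norm_num


end CRB

open MeasureTheory ProbabilityTheory
open scoped ENNReal

set_option maxHeartbeats 1000000 in
/-- univariate instance of the paper's Theorem 2: if
`α·μ_P²/(2σ²)` — the Rényi divergence between `N(X+μ_P, σ²)` and `N(X, σ²)` — is
below the discrete divergence bound computed from the label distribution `p` of `F`
under `N(X+μ_P, σ²)`, then the argmax label of `p` is also a maximizer of the label
distribution `p⁰` of `F` under `N(X, σ²)`. -/
theorem certified_robustness_bound_univariate (k : ℕ) (hk : 2 ≤ k)
    (F : ℝ → Fin k) (hF : Measurable F) (X μP : ℝ) (σ2 : NNReal) (hσ : 0 < σ2)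
    (p p0 : Fin k → ℝ)
    (hp : ∀ j, p j = ((gaussianReal (X + μP) σ2) {z | F z = j}).toReal)
    (hp0 : ∀ j, p0 j = ((gaussianReal X σ2) {z | F z = j}).toReal)
    (hp0pos : ∀ j, 0 < p0 j)
    (j₁ : Fin k) (hmax : ∀ j, j ≠ j₁ → p j < p j₁)
    (p₂ : ℝ) (hp₂ : IsGreatest (p '' {j | j ≠ j₁}) p₂) (hp₂pos : 0 < p₂)
    (hdiv : ∃ α : ℝ, 0 < α ∧ α ≠ 1 ∧
      α * μP ^ 2 / (2 * (σ2 : ℝ)) <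
        -Real.log (1 - p j₁ - p₂ +
          2 * ((p j₁ ^ (1 - α) + p₂ ^ (1 - α)) / 2) ^ (1 / (1 - α)))) :
    ∀ j, p0 j ≤ p0 j₁ := by
  by_contra hcon
  push_neg at hcon
  obtain ⟨j₂, hj₂⟩ := hcon
  have hj₂ne : j₂ ≠ j₁ := by rintro rfl; exact lt_irrefl _ hj₂
  obtain ⟨α, hα0, hα1, hlog⟩ := hdiv
  have hv : σ2 ≠ 0 := hσ.ne'
  set Q := gaussianReal X σ2 with hQdef
  set P := gaussianReal (X + μP) σ2 with hPdef
  set A : Set ℝ := {z | F z = j₁} with hAdef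
  set B : Set ℝ := {z | F z = j₂} with hBdef
  set R : Set ℝ := (A ∪ B)ᶜ with hRdef
  have hA : MeasurableSet A := hF (measurableSet_singleton j₁)
  have hB : MeasurableSet B := hF (measurableSet_singleton j₂)
  have hR : MeasurableSet R := (hA.union hB).compl
  have hAB : Disjoint A B := by
    rw [Set.disjoint_left]
    intro z hz1 hz2
    exact hj₂ne (hz2.symm.trans hz1)
  have hABR : Disjoint (A ∪ B) R := disjoint_compl_right
  have hunion : (A ∪ B) ∪ R = Set.univ := Set.union_compl_self _
  -- real quantities
  have hQA : Q A = ENNReal.ofReal (p0 j₁) := by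
    rw [hp0 j₁]; exact (ENNReal.ofReal_toReal (measure_ne_top _ _)).symm
  have hQB : Q B = ENNReal.ofReal (p0 j₂) := by
    rw [hp0 j₂]; exact (ENNReal.ofReal_toReal (measure_ne_top _ _)).symm
  have hPA : P A = ENNReal.ofReal (p j₁) := by
    rw [hp j₁]; exact (ENNReal.ofReal_toReal (measure_ne_top _ _)).symm
  have hPB : P B = ENNReal.ofReal (p j₂) := by
    rw [hp j₂]; exact (ENNReal.ofReal_toReal (measure_ne_top _ _)).symm
  have hx : 0 < p0 j₁ := hp0pos j₁
  have hy : 0 < p0 j₂ := hp0pos j₂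
  have hxy : p0 j₁ ≤ p0 j₂ := hj₂.le
  -- positivity of p j₂
  have hQBne : Q B ≠ 0 := by
    rw [hQB, Ne, ENNReal.ofReal_eq_zero, not_le]; exact hy
  have hvolB : volume B ≠ 0 := fun h => hQBne ((CRB.gauss_zero_iff X hv hB).2 h)
  have hPBne : P B ≠ 0 := fun h => hvolB ((CRB.gauss_zero_iff (X + μP) hv hB).1 h)
  have hb : 0 < p j₂ := by
    rw [hp j₂]; exact ENNReal.toReal_pos hPBne (measure_ne_top _ _)
  have hba : p j₂ < p j₁ := hmax j₂ hj₂ne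
  have ha : 0 < p j₁ := lt_trans hb hba
  have hbp₂ : p j₂ ≤ p₂ := hp₂.2 ⟨j₂, hj₂ne, rfl⟩
  have hp₂a : p₂ < p j₁ := by
    obtain ⟨j₃, hj₃mem, hj₃eq⟩ := hp₂.1
    rw [← hj₃eq]; exact hmax j₃ hj₃mem
  -- sums at most 1
  have hPAB : P (A ∪ B) = P A + P B := measure_union hAB hB
  have hQAB : Q (A ∪ B) = Q A + Q B := measure_union hAB hB
  have hab1 : p j₁ + p j₂ ≤ 1 := by
    have h1 : P (A ∪ B) ≤ 1 := prob_le_one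
    rw [hPAB, hPA, hPB, ← ENNReal.ofReal_add (le_of_lt ha) (le_of_lt hb),
      ← ENNReal.ofReal_one, ENNReal.ofReal_le_ofReal_iff zero_le_one] at h1
    exact h1
  have hxy1 : p0 j₁ + p0 j₂ ≤ 1 := by
    have h1 : Q (A ∪ B) ≤ 1 := prob_le_one
    rw [hQAB, hQA, hQB, ← ENNReal.ofReal_add (le_of_lt hx) (le_of_lt hy),
      ← ENNReal.ofReal_one, ENNReal.ofReal_le_ofReal_iff zero_le_one] at h1
    exact h1
  -- complements
  have hPR : P R = ENNReal.ofReal (1 - p j₁ - p j₂) := by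
    rw [hRdef, measure_compl (hA.union hB) (measure_ne_top _ _), measure_univ,
      hPAB, hPA, hPB, ← ENNReal.ofReal_add (le_of_lt ha) (le_of_lt hb),
      ← ENNReal.ofReal_one, ← ENNReal.ofReal_sub _ (by linarith : (0:ℝ) ≤ p j₁ + p j₂)]
    congr 1; ring
  have hQR : Q R = ENNReal.ofReal (1 - p0 j₁ - p0 j₂) := by
    rw [hRdef, measure_compl (hA.union hB) (measure_ne_top _ _), measure_univ,
      hQAB, hQA, hQB, ← ENNReal.ofReal_add (le_of_lt hx) (le_of_lt hy),
      ← ENNReal.ofReal_one, ← ENNReal.ofReal_sub _ (by linarith : (0:ℝ) ≤ p0 j₁ + p0 j₂)]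
    congr 1; ring
  have hrz : 1 - p j₁ - p j₂ = 0 → 1 - p0 j₁ - p0 j₂ = 0 := by
    intro hr0
    have hPR0 : P R = 0 := by rw [hPR, hr0, ENNReal.ofReal_zero]
    have hvolR : volume R = 0 := (CRB.gauss_zero_iff (X + μP) hv hR).1 hPR0
    have hQR0 : Q R = 0 := (CRB.gauss_zero_iff X hv hR).2 hvolR
    rw [hQR, ENNReal.ofReal_eq_zero] at hQR0
    linarith
  -- the ENNReal chain
  set h : ℝ → ℝ≥0∞ :=
    fun t => (gaussianPDF X σ2 t) ^ α * (gaussianPDF (X + μP) σ2 t) ^ (1-α) with hhdef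
  have hhm : Measurable h :=
    ((measurable_gaussianPDF X σ2).pow_const _).mul
      ((measurable_gaussianPDF (X + μP) σ2).pow_const _)
  have htot : ∫⁻ t, h t = ENNReal.ofReal (Real.exp (α * (α-1) * μP^2 / (2*(σ2:ℝ)))) :=
    CRB.lintegral_hfun hv X μP α
  have hsplit : ∫⁻ t, h t = (∫⁻ t in A, h t) + (∫⁻ t in B, h t) + (∫⁻ t in R, h t) := by
    rw [← setLIntegral_univ, ← hunion, lintegral_union hR hABR, lintegral_union hB hAB]
  -- conversion of cell products to ofReal
  have hapos := ha
  have eA : (Q A) ^ α * (P A) ^ (1-α)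
      = ENNReal.ofReal ((p0 j₁) ^ α * (p j₁) ^ (1-α)) := by
    rw [hQA, hPA, ENNReal.ofReal_rpow_of_pos hx, ENNReal.ofReal_rpow_of_pos ha,
      ← ENNReal.ofReal_mul (Real.rpow_nonneg hx.le _)]
  have eB : (Q B) ^ α * (P B) ^ (1-α)
      = ENNReal.ofReal ((p0 j₂) ^ α * (p j₂) ^ (1-α)) := by
    rw [hQB, hPB, ENNReal.ofReal_rpow_of_pos hy, ENNReal.ofReal_rpow_of_pos hb,
      ← ENNReal.ofReal_mul (Real.rpow_nonneg hy.le _)]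
  have hrnn : 0 ≤ 1 - p j₁ - p j₂ := by linarith
  have hznn : 0 ≤ 1 - p0 j₁ - p0 j₂ := by linarith
  have eR : (Q R) ^ α * (P R) ^ (1-α)
      = ENNReal.ofReal ((1 - p0 j₁ - p0 j₂) ^ α * (1 - p j₁ - p j₂) ^ (1-α)) := by
    rcases eq_or_lt_of_le hrnn with hr0 | hrpos
    · have hz0 : 1 - p0 j₁ - p0 j₂ = 0 := hrz hr0.symm
      rw [hQR, hz0, ENNReal.ofReal_zero, ENNReal.zero_rpow_of_pos hα0, zero_mul,
        Real.zero_rpow (ne_of_gt hα0), zero_mul, ENNReal.ofReal_zero]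
    · have hPRne : P R ≠ 0 := by
        rw [hPR, Ne, ENNReal.ofReal_eq_zero, not_le]; exact hrpos
      have hvolR : volume R ≠ 0 := fun hh => hPRne ((CRB.gauss_zero_iff (X + μP) hv hR).2 hh)
      have hQRne : Q R ≠ 0 := fun hh => hvolR ((CRB.gauss_zero_iff X hv hR).1 hh)
      have hzpos : 0 < 1 - p0 j₁ - p0 j₂ := by
        rcases eq_or_lt_of_le hznn with hz0 | hzpos
        · exfalso; apply hQRne; rw [hQR, ← hz0, ENNReal.ofReal_zero]
        · exact hzpos
      rw [hQR, hPR, ENNReal.ofReal_rpow_of_pos hzpos, ENNReal.ofReal_rpow_of_pos hrpos,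
        ← ENNReal.ofReal_mul (Real.rpow_nonneg hzpos.le _)]
  set S : ℝ := (p0 j₁) ^ α * (p j₁) ^ (1-α) + (p0 j₂) ^ α * (p j₂) ^ (1-α)
      + (1 - p0 j₁ - p0 j₂) ^ α * (1 - p j₁ - p j₂) ^ (1-α) with hSdef
  have hSnn : 0 ≤ S := by
    have h1 : 0 ≤ (p0 j₁) ^ α * (p j₁) ^ (1-α) := by positivity
    have h2 : 0 ≤ (p0 j₂) ^ α * (p j₂) ^ (1-α) := by positivity
    have h3 : 0 ≤ (1 - p0 j₁ - p0 j₂) ^ α * (1 - p j₁ - p j₂) ^ (1-α) := by positivity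
    linarith
  have hsum_eq : (Q A) ^ α * (P A) ^ (1-α) + (Q B) ^ α * (P B) ^ (1-α)
      + (Q R) ^ α * (P R) ^ (1-α) = ENNReal.ofReal S := by
    rw [eA, eB, eR, hSdef, ENNReal.ofReal_add (by positivity) (by positivity),
      ENNReal.ofReal_add (by positivity) (by positivity)]
  -- bound terms
  have hs0 : (1:ℝ) - α ≠ 0 := fun hh => hα1 (by linarith)
  have hs1 : (1:ℝ) - α < 1 := by linarith
  have ha1 : p j₁ ≤ 1 := by linarith
  set B1 : ℝ := 1 - p j₁ - p j₂
      + 2 * ((p j₁ ^ (1-α) + p j₂ ^ (1-α))/2) ^ (1/(1-α)) with hB1def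
  set B2 : ℝ := 1 - p j₁ - p₂
      + 2 * ((p j₁ ^ (1-α) + p₂ ^ (1-α))/2) ^ (1/(1-α)) with hB2def
  have hB1pos : 0 < B1 := by
    have hμb := CRB.mu_ge_min hs0 hs1 hb (le_of_lt hba)
    rw [hB1def]; nlinarith
  have hB2pos : 0 < B2 := by
    have hμb := CRB.mu_ge_min hs0 hs1 hp₂pos (le_of_lt hp₂a)
    rw [hB2def]; nlinarith
  have hB12 : B1 ≤ B2 := by
    have := CRB.bound_mono hs0 hs1 hb hbp₂ (le_of_lt hp₂a)
    rw [hB1def, hB2def]; linarith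
  set D : ℝ := α * μP ^ 2 / (2 * (σ2 : ℝ)) with hDdef
  have hDK : α * (α-1) * μP^2 / (2*(σ2:ℝ)) = (α - 1) * D := by
    rw [hDdef]; ring
  have hlogB2 : D < -Real.log B2 := hlog
  clear_value S B1 B2 D
  rcases lt_or_gt_of_ne hα1 with hα1' | hα1'
  · -- α < 1
    have hchain : ENNReal.ofReal (Real.exp ((α-1) * D)) ≤ ENNReal.ofReal S := by
      rw [← hsum_eq, ← hDK, ← htot, hsplit]
      gcongr
      · exact CRB.cell_le hv X μP hα0 hα1' hA
      · exact CRB.cell_le hv X μP hα0 hα1' hB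
      · exact CRB.cell_le hv X μP hα0 hα1' hR
    have hKS : Real.exp ((α-1) * D) ≤ S :=
      (ENNReal.ofReal_le_ofReal_iff hSnn).1 hchain
    have hclaim : S ≤ B1 ^ (1-α) := by
      rw [hSdef, hB1def]
      exact CRB.claim_lt1 hα0 hα1' hb (le_of_lt hba) hab1 hx hxy hxy1 hrz
    have hmono : B1 ^ (1-α) ≤ B2 ^ (1-α) :=
      Real.rpow_le_rpow hB1pos.le hB12 (by linarith)
    have hfin : Real.exp ((α-1) * D) ≤ B2 ^ (1-α) := le_trans hKS (le_trans hclaim hmono)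
    have hlog2 : (α-1) * D ≤ (1-α) * Real.log B2 := by
      have := Real.log_le_log (Real.exp_pos _) hfin
      rwa [Real.log_exp, Real.log_rpow hB2pos] at this
    have heq : (1-α) * (-D) = (α-1) * D := by ring
    have h2 : (1-α) * (-D) ≤ (1-α) * Real.log B2 := by linarith
    have h3 : -D ≤ Real.log B2 := le_of_mul_le_mul_left h2 (by linarith)
    linarith
  · -- α > 1
    have hchain : ENNReal.ofReal S ≤ ENNReal.ofReal (Real.exp ((α-1) * D)) := by
      rw [← hsum_eq, ← hDK, ← htot, hsplit]
      gcongr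
      · exact CRB.cell_ge hv X μP hα1' hA
      · exact CRB.cell_ge hv X μP hα1' hB
      · exact CRB.cell_ge hv X μP hα1' hR
    have hKS : S ≤ Real.exp ((α-1) * D) :=
      (ENNReal.ofReal_le_ofReal_iff (Real.exp_pos _).le).1 hchain
    have hclaim : B1 ^ (1-α) ≤ S := by
      rw [hSdef, hB1def]
      exact CRB.claim_gt1 hα1' hb (le_of_lt hba) hab1 hx hxy hxy1 hrz
    have hmono : B2 ^ (1-α) ≤ B1 ^ (1-α) :=
      Real.rpow_le_rpow_of_nonpos hB1pos hB12 (by linarith)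
    have hfin : B2 ^ (1-α) ≤ Real.exp ((α-1) * D) := le_trans hmono (le_trans hclaim hKS)
    have hlog2 : (1-α) * Real.log B2 ≤ (α-1) * D := by
      have := Real.log_le_log (Real.rpow_pos_of_pos hB2pos _) hfin
      rwa [Real.log_exp, Real.log_rpow hB2pos] at this
    have heq : (α-1) * (-Real.log B2) = (1-α) * Real.log B2 := by ring
    have h2 : (α-1) * (-Real.log B2) ≤ (α-1) * D := by linarith
    have h3 : -Real.log B2 ≤ D := le_of_mul_le_mul_left h2 (by linarith)
    linarith
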